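/- Let (S, R, k) be a reversible detailed balanced reaction system with no critical siphons and point of detailed balance α, and fix u ∈ ℝ^S_{>0}. Then the unique minimizer β of g(x) := ∑_{i∈S} (x_i log x_i − x_i − x_i log α_i) over (u + H) ∩ ℝ^S_{≥0} is itself a point of detailed balance of (S, R, k). -/

import Mathlib

/- STATEMENT 10: For a reversible detailed balanced reaction system with no
   critical siphons and point of detailed balance α, the unique minimizer β of
   g over (u + H) ∩ ℝ^S_{≥0} is itself a point of detailed balance. -/
open scoped BigOperators

noncomputable section

/-- A reaction `y → y'` over a species set `S`. -/
abbrev Reaction (S : Type) := (S → ℕ) × (S → ℕ)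

variable {S : Type} [Fintype S] [DecidableEq S]

/-- The mass-action vector field `∑_{y→y'∈R} k_{y→y'} x^y (y' - y)`. -/
def massActionVF (R : Finset (Reaction S)) (k : Reaction S → ℝ) (x : S → ℝ) :
    S → ℝ :=
  fun i => ∑ r ∈ R, k r * (∏ i', x i' ^ r.1 i') * ((r.2 i : ℝ) - (r.1 i : ℝ))

/-- `x : [0,∞) → ℝ^S_{≥0}` solves the mass-action equations. -/
def IsMassActionSolution (R : Finset (Reaction S)) (k : Reaction S → ℝ)
    (x : ℝ → S → ℝ) : Prop :=
  (∀ t ∈ Set.Ici (0 : ℝ), ∀ i, 0 ≤ x t i) ∧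
  ∀ t ∈ Set.Ici (0 : ℝ), HasDerivWithinAt x (massActionVF R k (x t)) (Set.Ici 0) t

/-- Weak reversibility: every reaction can be reversed by a chain of reactions. -/
def WeaklyReversible (R : Finset (Reaction S)) : Prop :=
  ∀ r ∈ R, ∃ n : ℕ, ∃ c : Fin (n + 1) → (S → ℕ),
    c 0 = r.2 ∧ c (Fin.last n) = r.1 ∧
    ∀ i : Fin n, (c i.castSucc, c i.succ) ∈ R

/-- The stoichiometric subspace `H`, spanned by the reaction vectors `y' - y`. -/
def stoichSubspace (R : Finset (Reaction S)) : Submodule ℝ (S → ℝ) :=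
  Submodule.span ℝ {v | ∃ r ∈ R, v = fun i => ((r.2 i : ℝ) - (r.1 i : ℝ))}

/-- A (nonempty) siphon. -/
def IsSiphon (R : Finset (Reaction S)) (T : Set S) : Prop :=
  T.Nonempty ∧ ∀ r ∈ R, (∃ i ∈ T, 0 < r.2 i) → ∃ j ∈ T, 0 < r.1 j

/-- A critical siphon: a siphon `T` such that the only nonnegative vector of
    `H^⊥` supported on `T` is `0`. -/
def IsCriticalSiphon (R : Finset (Reaction S)) (T : Set S) : Prop :=
  IsSiphon R T ∧ ∀ v : S → ℝ,
    (∀ h ∈ stoichSubspace R, ∑ i, v i * h i = 0) →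
    (∀ i, 0 ≤ v i) → (∀ i, i ∉ T → v i = 0) → v = 0

/-- `α ∈ ℝ^S_{>0}` is a point of complex balance. -/
def IsComplexBalancePoint (R : Finset (Reaction S)) (k : Reaction S → ℝ)
    (α : S → ℝ) : Prop :=
  (∀ i, 0 < α i) ∧ ∀ y : S → ℕ, ∀ i : S,
    (∑ r ∈ R.filter (fun r => r.1 = y),
        k r * (∏ i', α i' ^ y i') * ((r.2 i : ℝ) - (y i : ℝ))) =
    ∑ r ∈ R.filter (fun r => r.2 = y),
        k r * (∏ i', α i' ^ r.1 i') * ((y i : ℝ) - (r.1 i : ℝ))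

/-- Reversibility: `y → y' ∈ R` implies `y' → y ∈ R`. -/
def Reversible (R : Finset (Reaction S)) : Prop := ∀ r ∈ R, (r.2, r.1) ∈ R

/-- `α ∈ ℝ^S_{>0}` is a point of detailed balance. -/
def IsDetailedBalancePoint (R : Finset (Reaction S)) (k : Reaction S → ℝ)
    (α : S → ℝ) : Prop :=
  Reversible R ∧ (∀ i, 0 < α i) ∧
  ∀ r ∈ R, k r * ∏ i, α i ^ r.1 i = k (r.2, r.1) * ∏ i, α i ^ r.2 i

/-- The Lyapunov function `g(x) = ∑ᵢ (xᵢ log xᵢ - xᵢ - xᵢ log αᵢ)`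
    (convention `0 log 0 = 0`, which holds since `Real.log 0 = 0`). -/
def lyap (α x : S → ℝ) : ℝ :=
  ∑ i, (x i * Real.log (x i) - x i - x i * Real.log (α i))


set_option linter.unusedSectionVars false

lemma hasDerivAt_phiSum (α β v : S → ℝ) (P : Finset S) (hP : ∀ j ∈ P, β j ≠ 0) :
    HasDerivAt (fun ε : ℝ => ∑ j ∈ P, ((β j + ε * v j) * Real.log (β j + ε * v j)
        - (β j + ε * v j) - (β j + ε * v j) * Real.log (α j)))
      (∑ j ∈ P, v j * (Real.log (β j) - Real.log (α j))) 0 := by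
  apply HasDerivAt.fun_sum
  intro j hj
  have hlin : HasDerivAt (fun ε : ℝ => β j + ε * v j) (v j) 0 := by
    simpa using (((hasDerivAt_id (0 : ℝ)).mul_const (v j)).const_add (β j))
  have hml : HasDerivAt (fun x : ℝ => x * Real.log x) (Real.log (β j) + 1) (β j + 0 * v j) := by
    simpa using Real.hasDerivAt_mul_log (hP j hj)
  have h1 : HasDerivAt (fun ε : ℝ => (β j + ε * v j) * Real.log (β j + ε * v j))
      ((Real.log (β j) + 1) * v j) 0 := by have h := hml.comp 0 hlin; exact h
  have h2 := (h1.fun_sub hlin).fun_sub (hlin.mul_const (Real.log (α j)))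
  convert h2 using 1
  ring

lemma lineMem (R : Finset (Reaction S)) (u β v : S → ℝ)
    (hβmem : β - u ∈ stoichSubspace R) (hv : v ∈ stoichSubspace R) (ε : ℝ) :
    (fun i => β i + ε * v i) - u ∈ stoichSubspace R := by
  have h : (fun i => β i + ε * v i) - u = (β - u) + ε • v := by
    funext i
    simp only [Pi.sub_apply, Pi.add_apply, Pi.smul_apply, smul_eq_mul]
    ring
  rw [h]
  exact Submodule.add_mem _ hβmem (Submodule.smul_mem _ _ hv)

lemma grad_zero (R : Finset (Reaction S)) (α u β : S → ℝ)
    (hβpos : ∀ i, 0 < β i) (hβmem : β - u ∈ stoichSubspace R)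
    (hβmin : ∀ z : S → ℝ, (∀ i, 0 ≤ z i) → z - u ∈ stoichSubspace R →
      lyap α β ≤ lyap α z)
    (v : S → ℝ) (hv : v ∈ stoichSubspace R) :
    ∑ i, v i * (Real.log (β i) - Real.log (α i)) = 0 := by
  have hD := hasDerivAt_phiSum α β v Finset.univ (fun j _ => (hβpos j).ne')
  have hloc : IsLocalMin (fun ε : ℝ => lyap α (fun i => β i + ε * v i)) 0 := by
    have hev : ∀ᶠ ε : ℝ in nhds 0, ∀ i ∈ (Finset.univ : Finset S), 0 < β i + ε * v i := by
      rw [Filter.eventually_all_finset]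
      intro i _
      have hc : Continuous (fun ε : ℝ => β i + ε * v i) := by fun_prop
      have ht : Filter.Tendsto (fun ε : ℝ => β i + ε * v i) (nhds 0) (nhds (β i)) := by
        simpa using hc.tendsto 0
      exact ht.eventually (eventually_gt_nhds (hβpos i))
    filter_upwards [hev] with ε hε
    exact le_trans (le_of_eq (by simp [lyap]))
      (hβmin _ (fun i => (hε i (Finset.mem_univ i)).le) (lineMem R u β v hβmem hv ε))
  exact hloc.hasDerivAt_eq_zero (by simpa [lyap] using hD)

lemma beta_pos (R : Finset (Reaction S)) (α u β : S → ℝ)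
    (hnocrit : ∀ T : Set S, ¬ IsCriticalSiphon R T) (hu : ∀ i, 0 < u i)
    (hβnn : ∀ i, 0 ≤ β i) (hβmem : β - u ∈ stoichSubspace R)
    (hβmin : ∀ z : S → ℝ, (∀ i, 0 ≤ z i) → z - u ∈ stoichSubspace R →
      lyap α β ≤ lyap α z) :
    ∀ i, 0 < β i := by
  classical
  by_contra hcon
  push_neg at hcon
  obtain ⟨i0, hi0le⟩ := hcon
  have hi0 : β i0 = 0 := le_antisymm hi0le (hβnn i0)
  set T : Set S := {i | β i = 0} with hT
  have hTne : T.Nonempty := ⟨i0, hi0⟩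
  by_cases hsip : IsSiphon R T
  · -- T is a siphon; since it is not critical, get a nonzero conservation vector on T
    have hncrit := hnocrit T
    rw [IsCriticalSiphon] at hncrit
    push_neg at hncrit
    obtain ⟨w, hw1, hw2, hw3, hw4⟩ := hncrit hsip
    have h0 : ∑ i, w i * (β i - u i) = 0 := by
      have := hw1 (β - u) hβmem
      simpa [Pi.sub_apply] using this
    have hwβ : ∀ i, w i * β i = 0 := by
      intro i
      by_cases h : β i = 0
      · simp [h]
      · rw [hw3 i h, zero_mul]
    have hsum : ∑ i, w i * u i = 0 := by
      have h1 : ∑ i, w i * (β i - u i) = ∑ i, w i * β i - ∑ i, w i * u i := by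
        rw [← Finset.sum_sub_distrib]
        exact Finset.sum_congr rfl (fun i _ => by ring)
      have h2 : ∑ i, w i * β i = 0 := Finset.sum_eq_zero (fun i _ => hwβ i)
      rw [h1, h2] at h0
      linarith
    obtain ⟨j, hj⟩ : ∃ j, w j ≠ 0 := by
      by_contra h
      push_neg at h
      exact hw4 (funext fun j => h j)
    have hpos : 0 < ∑ i, w i * u i :=
      Finset.sum_pos' (fun i _ => mul_nonneg (hw2 i) (hu i).le)
        ⟨j, Finset.mem_univ j, mul_pos ((hw2 j).lt_of_ne (Ne.symm hj)) (hu j)⟩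
    linarith
  · -- T is not a siphon: analytic descent argument
    rw [IsSiphon] at hsip
    push_neg at hsip
    obtain ⟨r, hrR, ⟨i1, hi1T, hi1pos⟩, hTz⟩ := hsip hTne
    have hr1T : ∀ j, β j = 0 → r.1 j = 0 := fun j hj =>
      Nat.le_zero.mp (by simpa using hTz j hj)
    set v : S → ℝ := fun i => ((r.2 i : ℝ) - (r.1 i : ℝ)) with hvdef
    have hvmem : v ∈ stoichSubspace R := Submodule.subset_span ⟨r, hrR, rfl⟩
    have hvZ : ∀ j, β j = 0 → v j = (r.2 j : ℝ) := by
      intro j hj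
      simp [hvdef, hr1T j hj]
    have hvnn : ∀ j, β j = 0 → 0 ≤ v j := by
      intro j hj
      rw [hvZ j hj]
      positivity
    set Z : Finset S := Finset.univ.filter (fun j => β j = 0) with hZdef
    set P : Finset S := Finset.univ.filter (fun j => ¬ β j = 0) with hPdef
    have hψ := hasDerivAt_phiSum α β v P (fun j hj => (Finset.mem_filter.mp hj).2)
    set ψ : ℝ → ℝ := fun ε => ∑ j ∈ P, ((β j + ε * v j) * Real.log (β j + ε * v j)
        - (β j + ε * v j) - (β j + ε * v j) * Real.log (α j)) with hψdef
    set c : ℝ := ∑ j ∈ Z, v j with hcdef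
    set C : ℝ := ∑ j ∈ Z, (v j * Real.log (v j) - v j - v j * Real.log (α j)) with hCdef
    have hi1Z : i1 ∈ Z := Finset.mem_filter.mpr ⟨Finset.mem_univ i1, hi1T⟩
    have hcpos : 0 < c := by
      refine Finset.sum_pos' (fun j hj => hvnn j (Finset.mem_filter.mp hj).2) ⟨i1, hi1Z, ?_⟩
      rw [hvZ i1 hi1T]
      exact_mod_cast hi1pos
    have hG : Filter.Tendsto (fun ε => slope ψ 0 ε + (c * Real.log ε + C))
        (nhdsWithin 0 (Set.Ioi 0)) Filter.atBot := by
      apply Filter.Tendsto.add_atBot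
      · refine (hasDerivAt_iff_tendsto_slope.mp hψ).mono_left
          (nhdsWithin_mono _ (fun x hx => ?_))
        simpa using ne_of_gt hx
      · exact Filter.tendsto_atBot_add_const_right _ C
          (Filter.Tendsto.const_mul_atBot hcpos Real.tendsto_log_nhdsGT_zero)
    have hev1 : ∀ᶠ ε in nhdsWithin (0:ℝ) (Set.Ioi 0),
        slope ψ 0 ε + (c * Real.log ε + C) < 0 := hG.eventually_lt_atBot 0
    have hev2 : ∀ᶠ ε in nhdsWithin (0:ℝ) (Set.Ioi 0), ∀ j ∈ P, 0 < β j + ε * v j := by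
      rw [Filter.eventually_all_finset]
      intro j hj
      have hb : 0 < β j := (hβnn j).lt_of_ne (Ne.symm (Finset.mem_filter.mp hj).2)
      have hc2 : Continuous (fun ε : ℝ => β j + ε * v j) := by fun_prop
      have ht : Filter.Tendsto (fun ε : ℝ => β j + ε * v j)
          (nhdsWithin 0 (Set.Ioi 0)) (nhds (β j)) :=
        Filter.Tendsto.mono_left (by simpa using hc2.tendsto 0) nhdsWithin_le_nhds
      exact ht.eventually (eventually_gt_nhds hb)
    have hev3 : ∀ᶠ ε in nhdsWithin (0:ℝ) (Set.Ioi 0), (0:ℝ) < ε :=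
      eventually_mem_nhdsWithin
    obtain ⟨ε, hεneg, hεP, hεpos⟩ := (hev1.and (hev2.and hev3)).exists
    set z : S → ℝ := fun i => β i + ε * v i with hzdef
    have hznn : ∀ i, 0 ≤ z i := by
      intro i
      by_cases h : β i = 0
      · have := hvnn i h
        simp only [hzdef, h, zero_add]
        exact mul_nonneg hεpos.le this
      · exact (hεP i (Finset.mem_filter.mpr ⟨Finset.mem_univ i, h⟩)).le
    have hzmem : z - u ∈ stoichSubspace R := lineMem R u β v hβmem hvmem ε
    have hmin := hβmin z hznn hzmem
    -- key identity
    have hψ0 : ψ 0 = ∑ j ∈ P, (β j * Real.log (β j) - β j - β j * Real.log (α j)) := by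
      simp [hψdef]
    have hψε : ψ ε = ∑ j ∈ P, (z j * Real.log (z j) - z j - z j * Real.log (α j)) := rfl
    have e4 : ε * slope ψ 0 ε = ψ ε - ψ 0 := by
      rw [slope_def_field, sub_zero]
      field_simp
    have e5 : ε * (c * Real.log ε + C)
        = ∑ j ∈ Z, (z j * Real.log (z j) - z j - z j * Real.log (α j)) := by
      have h1 : ε * (c * Real.log ε + C)
          = ∑ j ∈ Z, (ε * (v j * Real.log ε)
              + ε * (v j * Real.log (v j) - v j - v j * Real.log (α j))) := by
        rw [hcdef, hCdef, Finset.sum_add_distrib, ← Finset.mul_sum, ← Finset.mul_sum,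
          ← Finset.sum_mul]
        ring
      rw [h1]
      refine Finset.sum_congr rfl (fun j hj => ?_)
      have hβj : β j = 0 := (Finset.mem_filter.mp hj).2
      have hzj : z j = ε * v j := by simp [hzdef, hβj]
      rw [hzj]
      rcases eq_or_lt_of_le (hvnn j hβj) with h | h
      · simp [← h]
      · rw [Real.log_mul hεpos.ne' h.ne']
        ring
    have hsplitz : lyap α z
        = ∑ j ∈ Z, (z j * Real.log (z j) - z j - z j * Real.log (α j))
          + ∑ j ∈ P, (z j * Real.log (z j) - z j - z j * Real.log (α j)) := by
      rw [lyap]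
      exact (Finset.sum_filter_add_sum_filter_not Finset.univ (fun j => β j = 0) _).symm
    have hsplitβ : lyap α β
        = ∑ j ∈ P, (β j * Real.log (β j) - β j - β j * Real.log (α j)) := by
      have h := (Finset.sum_filter_add_sum_filter_not Finset.univ (fun j => β j = 0)
        (fun j => β j * Real.log (β j) - β j - β j * Real.log (α j))).symm
      have hzero : ∑ j ∈ Finset.univ.filter (fun j => β j = 0),
          (β j * Real.log (β j) - β j - β j * Real.log (α j)) = 0 :=
        Finset.sum_eq_zero (fun j hj => by
          have hb : β j = 0 := (Finset.mem_filter.mp hj).2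
          simp [hb])
      rw [lyap, h, hzero, zero_add]
    have hkey : lyap α z - lyap α β = ε * (slope ψ 0 ε + (c * Real.log ε + C)) := by
      rw [hsplitz, hsplitβ, mul_add, e4, e5, hψε, hψ0]
      ring
    have hneg : ε * (slope ψ 0 ε + (c * Real.log ε + C)) < 0 :=
      mul_neg_of_pos_of_neg hεpos hεneg
    linarith

theorem stmt10 (R : Finset (Reaction S)) (k : Reaction S → ℝ)
    (hk : ∀ r ∈ R, 0 < k r) (hrev : Reversible R)
    (α : S → ℝ) (hα : IsDetailedBalancePoint R k α)
    (hnocrit : ∀ T : Set S, ¬ IsCriticalSiphon R T)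
    (u : S → ℝ) (hu : ∀ i, 0 < u i)
    (β : S → ℝ) (hβnn : ∀ i, 0 ≤ β i) (hβmem : β - u ∈ stoichSubspace R)
    (hβmin : ∀ z : S → ℝ, (∀ i, 0 ≤ z i) → z - u ∈ stoichSubspace R →
      lyap α β ≤ lyap α z)
    (hβuniq : ∀ z : S → ℝ, (∀ i, 0 ≤ z i) → z - u ∈ stoichSubspace R →
      (∀ z' : S → ℝ, (∀ i, 0 ≤ z' i) → z' - u ∈ stoichSubspace R →
        lyap α z ≤ lyap α z') → z = β) :
    IsDetailedBalancePoint R k β := by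
  classical
  have hβpos : ∀ i, 0 < β i := beta_pos R α u β hnocrit hu hβnn hβmem hβmin
  obtain ⟨hrevα, hαpos, hαbal⟩ := hα
  refine ⟨hrev, hβpos, ?_⟩
  intro r hr
  have hrv : (r.2, r.1) ∈ R := hrev r hr
  have hkr : 0 < k r := hk r hr
  have hkrv : 0 < k (r.2, r.1) := hk _ hrv
  have hprodβ : ∀ y : S → ℕ, 0 < ∏ i, β i ^ y i :=
    fun y => Finset.prod_pos (fun i _ => pow_pos (hβpos i) _)
  have hprodα : ∀ y : S → ℕ, 0 < ∏ i, α i ^ y i :=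
    fun y => Finset.prod_pos (fun i _ => pow_pos (hαpos i) _)
  have hlogβ : ∀ y : S → ℕ, Real.log (∏ i, β i ^ y i) = ∑ i, (y i : ℝ) * Real.log (β i) := by
    intro y
    rw [Real.log_prod (fun i _ => pow_ne_zero _ (hβpos i).ne')]
    exact Finset.sum_congr rfl (fun i _ => Real.log_pow _ _)
  have hlogα : ∀ y : S → ℕ, Real.log (∏ i, α i ^ y i) = ∑ i, (y i : ℝ) * Real.log (α i) := by
    intro y
    rw [Real.log_prod (fun i _ => pow_ne_zero _ (hαpos i).ne')]
    exact Finset.sum_congr rfl (fun i _ => Real.log_pow _ _)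
  have hαlog : Real.log (k r) + ∑ i, (r.1 i : ℝ) * Real.log (α i)
      = Real.log (k (r.2, r.1)) + ∑ i, (r.2 i : ℝ) * Real.log (α i) := by
    have h := congrArg Real.log (hαbal r hr)
    rwa [Real.log_mul hkr.ne' (hprodα r.1).ne', Real.log_mul hkrv.ne' (hprodα r.2).ne',
      hlogα, hlogα] at h
  have hg := grad_zero R α u β hβpos hβmem hβmin _
    (Submodule.subset_span ⟨r, hr, rfl⟩)
  have hg' : (∑ i, (r.2 i : ℝ) * Real.log (β i)) - (∑ i, (r.1 i : ℝ) * Real.log (β i))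
      - (∑ i, (r.2 i : ℝ) * Real.log (α i)) + (∑ i, (r.1 i : ℝ) * Real.log (α i)) = 0 := by
    rw [← hg, ← Finset.sum_sub_distrib, ← Finset.sum_sub_distrib, ← Finset.sum_add_distrib]
    exact Finset.sum_congr rfl (fun i _ => by ring)
  refine Real.log_injOn_pos (Set.mem_Ioi.mpr (mul_pos hkr (hprodβ r.1)))
    (Set.mem_Ioi.mpr (mul_pos hkrv (hprodβ r.2))) ?_
  rw [Real.log_mul hkr.ne' (hprodβ r.1).ne', Real.log_mul hkrv.ne' (hprodβ r.2).ne',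
    hlogβ, hlogβ]
  linarith
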